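/- arXiv:2412.20115 — 7 statements merged into one kernel-verified Lean document; each statement's English description precedes it below -/
import Mathlib

section
/- Let f : E → ℝ be differentiable and L-smooth with L > 0, and let x : ℕ → E be the gradient descent sequence with constant step size λ = 1/L, i.e., x_{k+1} = x_k - (1/L)·∇f(x_k). Then for every n ≥ 1, (1/(2L))·∑_{k=0}^{n-1} ‖∇f(x_k)‖² ≤ f(x_0) - f(x_n). -/
open RealInnerProductSpace

theorem descent_lemma_aux {E : Type*} [NormedAddCommGroup E] [InnerProductSpace ℝ E] [CompleteSpace E]
    (f : E → ℝ) (f' : E → E) (L : ℝ) (hL : 0 < L)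
    (hdiff : ∀ x, HasGradientAt f (f' x) x)
    (hsmooth : ∀ x y, ‖f' x - f' y‖ ≤ L * ‖x - y‖)
    (a b : E) : f b ≤ f a + ⟪f' a, b - a⟫ + L / 2 * ‖b - a‖ ^ 2 := by
  have hcont : Continuous f' := by
    refine (LipschitzWith.of_dist_le_mul (K := L.toNNReal) fun p q => ?_).continuous
    simpa [dist_eq_norm, Real.coe_toNNReal _ hL.le] using hsmooth p q
  set c : ℝ → E := fun t => a + t • (b - a) with hc
  have hcont_c : Continuous c := by continuity
  have hderiv : ∀ t : ℝ, HasDerivAt (fun s => f (c s)) ⟪f' (c t), b - a⟫ t := by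
    intro t
    have h1 : HasDerivAt c (b - a) t := by
      have : HasDerivAt (fun s : ℝ => s • (b - a)) ((1 : ℝ) • (b - a)) t :=
        (hasDerivAt_id t).smul_const (b - a)
      simpa [hc] using this.const_add a
    have h2 := (hdiff (c t)).hasFDerivAt.comp_hasDerivAt t h1
    simpa [InnerProductSpace.toDual_apply_apply, Function.comp_def] using h2
  have hgc : Continuous fun t : ℝ => ⟪f' (c t), b - a⟫ :=
    (continuous_inner.comp ((hcont.comp hcont_c).prodMk continuous_const))
  have hint : ∫ t in (0:ℝ)..1, ⟪f' (c t), b - a⟫ = f b - f a := by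
    have := intervalIntegral.integral_eq_sub_of_hasDerivAt
      (f := fun s => f (c s)) (f' := fun t => ⟪f' (c t), b - a⟫)
      (a := 0) (b := 1) (fun t _ => hderiv t) (hgc.intervalIntegrable 0 1)
    simpa [hc] using this
  have hbound : ∫ t in (0:ℝ)..1, ⟪f' (c t), b - a⟫ ≤
      ∫ t in (0:ℝ)..1, (⟪f' a, b - a⟫ + L * t * ‖b - a‖ ^ 2) := by
    apply intervalIntegral.integral_mono_on (by norm_num)
      (hgc.intervalIntegrable 0 1)
      ((by continuity : Continuous fun t : ℝ => ⟪f' a, b - a⟫ + L * t * ‖b - a‖ ^ 2).intervalIntegrable 0 1)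
    intro t ht
    have h1 : ⟪f' (c t), b - a⟫ - ⟪f' a, b - a⟫ = ⟪f' (c t) - f' a, b - a⟫ := by
      rw [inner_sub_left]
    have h2 : ⟪f' (c t) - f' a, b - a⟫ ≤ ‖f' (c t) - f' a‖ * ‖b - a‖ :=
      real_inner_le_norm _ _
    have h3 : ‖f' (c t) - f' a‖ ≤ L * (t * ‖b - a‖) := by
      have := hsmooth (c t) a
      have hca : c t - a = t • (b - a) := by simp [hc]
      rw [hca] at this
      calc ‖f' (c t) - f' a‖ ≤ L * ‖t • (b - a)‖ := this
        _ = L * (|t| * ‖b - a‖) := by rw [norm_smul]; simp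
        _ = L * (t * ‖b - a‖) := by rw [abs_of_nonneg ht.1]
    nlinarith [norm_nonneg (b - a), h2, mul_le_mul_of_nonneg_right h3 (norm_nonneg (b - a))]
  have hval : ∫ t in (0:ℝ)..1, (⟪f' a, b - a⟫ + L * t * ‖b - a‖ ^ 2) =
      ⟪f' a, b - a⟫ + L / 2 * ‖b - a‖ ^ 2 := by
    rw [intervalIntegral.integral_add (intervalIntegrable_const)
      ((by continuity : Continuous fun t : ℝ => L * t * ‖b - a‖ ^ 2).intervalIntegrable 0 1)]
    have : ∫ t in (0:ℝ)..1, L * t * ‖b - a‖ ^ 2 = (L * ‖b - a‖ ^ 2) * ∫ t in (0:ℝ)..1, t := by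
      rw [← intervalIntegral.integral_const_mul]; congr 1; ext t; ring
    rw [this, integral_id]
    norm_num
    ring
  linarith [hint ▸ (hval ▸ hbound)]

theorem gd_sum_grad_norm_bound {E : Type*} [NormedAddCommGroup E] [InnerProductSpace ℝ E] [CompleteSpace E]
    (f : E → ℝ) (f' : E → E) (L : ℝ) (hL : 0 < L)
    (hdiff : ∀ x, HasGradientAt f (f' x) x)
    (hsmooth : ∀ x y, ‖f' x - f' y‖ ≤ L * ‖x - y‖)
    (x : ℕ → E)
    (hiter : ∀ k, x (k + 1) = x k - (1 / L) • f' (x k)) :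
    ∀ n : ℕ, 1 ≤ n →
      (1 / (2 * L)) * ∑ k ∈ Finset.range n, ‖f' (x k)‖ ^ 2 ≤ f (x 0) - f (x n) := by
  have hstep : ∀ k, f (x (k + 1)) ≤ f (x k) - 1 / (2 * L) * ‖f' (x k)‖ ^ 2 := by
    intro k
    have h := descent_lemma_aux f f' L hL hdiff hsmooth (x k) (x (k + 1))
    have hd : x (k + 1) - x k = -((1 / L) • f' (x k)) := by rw [hiter k]; abel
    rw [hd] at h
    have hin : ⟪f' (x k), -((1 / L) • f' (x k))⟫ = -(1 / L) * ‖f' (x k)‖ ^ 2 := by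
      rw [inner_neg_right, real_inner_smul_right, real_inner_self_eq_norm_sq]; ring
    have hn : ‖-((1 / L) • f' (x k))‖ ^ 2 = (1 / L) ^ 2 * ‖f' (x k)‖ ^ 2 := by
      rw [norm_neg, norm_smul]
      rw [mul_pow]
      congr 1
      rw [Real.norm_eq_abs, sq_abs]
    rw [hin, hn] at h
    have : L / 2 * ((1 / L) ^ 2 * ‖f' (x k)‖ ^ 2) = 1 / (2 * L) * ‖f' (x k)‖ ^ 2 := by
      field_simp
    have h2 : (1 / L) * ‖f' (x k)‖ ^ 2 = 2 * (1 / (2 * L) * ‖f' (x k)‖ ^ 2) := by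
      field_simp
    linarith [h, this, h2]
  have key : ∀ n : ℕ, (1 / (2 * L)) * ∑ k ∈ Finset.range n, ‖f' (x k)‖ ^ 2 ≤ f (x 0) - f (x n) := by
    intro n
    induction n with
    | zero => simp
    | succ m ih =>
      rw [Finset.sum_range_succ, mul_add]
      have := hstep m
      linarith
  exact fun n _ => key n
end

section
/- Let f : E → ℝ be differentiable, convex, and L-smooth with L > 0, and let x* ∈ E be a global minimizer of f. Let x : ℕ → E be the gradient descent sequence with constant step size λ = 1/L, i.e., x_{k+1} = x_k - (1/L)·∇f(x_k), starting from x_0 ∈ E. Then for every n ≥ 1, f(x_n) - f(x*) ≤ (L/(2n))·‖x_0 - x*‖². -/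
open RealInnerProductSpace

private lemma line_hasDerivAt {E : Type*} [NormedAddCommGroup E] [InnerProductSpace ℝ E] [CompleteSpace E]
    (f : E → ℝ) (f' : E → E) (hdiff : ∀ x, HasGradientAt f (f' x) x) (a v : E) (t : ℝ) :
    HasDerivAt (fun s : ℝ => f (a + s • v)) ⟪f' (a + t • v), v⟫ t := by
  have hc : HasDerivAt (fun s : ℝ => a + s • v) v t := by
    simpa using ((hasDerivAt_id t).smul_const v).const_add a
  have hF := (hasGradientAt_iff_hasFDerivAt.mp (hdiff (a + t • v)))
  have := hF.comp_hasDerivAt t hc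
  simp [InnerProductSpace.toDual_apply_apply] at this
  exact this

private lemma grad_convex_ineq {E : Type*} [NormedAddCommGroup E] [InnerProductSpace ℝ E] [CompleteSpace E]
    (f : E → ℝ) (f' : E → E) (hdiff : ∀ x, HasGradientAt f (f' x) x)
    (hconv : ConvexOn ℝ Set.univ f) (a b : E) :
    f a + ⟪f' a, b - a⟫ ≤ f b := by
  set g : ℝ → ℝ := fun t => f (a + t • (b - a)) with hg
  have hgd : HasDerivAt g ⟪f' a, b - a⟫ 0 := by
    have := line_hasDerivAt f f' hdiff a (b - a) 0
    simpa using this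
  have hgc : ConvexOn ℝ Set.univ g := by
    have := hconv.comp_affineMap (AffineMap.lineMap a b : ℝ →ᵃ[ℝ] E)
    have heq : (f ∘ (AffineMap.lineMap a b : ℝ →ᵃ[ℝ] E)) = g := by
      funext t
      simp [AffineMap.lineMap_apply, g, add_comm]
    rw [heq] at this
    simpa using this
  have := hgc.le_slope_of_hasDerivAt (Set.mem_univ (0:ℝ)) (Set.mem_univ (1:ℝ)) one_pos hgd
  rw [slope_def_field] at this
  have h0 : g 0 = f a := by simp [g]
  have h1 : g 1 = f b := by simp [g]
  rw [h0, h1] at this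
  linarith [this]

private lemma smooth_descent {E : Type*} [NormedAddCommGroup E] [InnerProductSpace ℝ E] [CompleteSpace E]
    (f : E → ℝ) (f' : E → E) (L : ℝ) (hL : 0 < L)
    (hdiff : ∀ x, HasGradientAt f (f' x) x)
    (hsmooth : ∀ x y, ‖f' x - f' y‖ ≤ L * ‖x - y‖) (a v : E) :
    f (a + v) ≤ f a + ⟪f' a, v⟫ + L / 2 * ‖v‖ ^ 2 := by
  set h : ℝ → ℝ := fun t => f (a + t • v) - t * ⟪f' a, v⟫ - L / 2 * t ^ 2 * ‖v‖ ^ 2 with hh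
  have hhd : ∀ t : ℝ, HasDerivAt h
      (⟪f' (a + t • v), v⟫ - ⟪f' a, v⟫ - L * t * ‖v‖ ^ 2) t := by
    intro t
    have h1 := line_hasDerivAt f f' hdiff a v t
    have h2 : HasDerivAt (fun s : ℝ => s * ⟪f' a, v⟫) ⟪f' a, v⟫ t := by
      simpa using (hasDerivAt_id t).mul_const ⟪f' a, v⟫
    have h3 : HasDerivAt (fun s : ℝ => L / 2 * s ^ 2 * ‖v‖ ^ 2) (L * t * ‖v‖ ^ 2) t := by
      have := ((hasDerivAt_pow 2 t).const_mul (L / 2)).mul_const (‖v‖ ^ 2)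
      exact this.congr_deriv (by ring)
    exact (h1.sub h2).sub h3
  have hanti : AntitoneOn h (Set.Icc (0:ℝ) 1) := by
    have hdble : Differentiable ℝ h := fun t => (hhd t).differentiableAt
    apply antitoneOn_of_deriv_nonpos (convex_Icc 0 1)
    · exact hdble.continuous.continuousOn
    · exact fun t _ => (hdble t).differentiableWithinAt
    · intro t ht
      rw [interior_Icc] at ht
      rw [(hhd t).deriv]
      have hcs : ⟪f' (a + t • v) - f' a, v⟫ ≤ ‖f' (a + t • v) - f' a‖ * ‖v‖ :=
        real_inner_le_norm _ _
      have hlip : ‖f' (a + t • v) - f' a‖ ≤ L * ‖(a + t • v) - a‖ := hsmooth _ _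
      have hnorm : ‖(a + t • v) - a‖ = t * ‖v‖ := by
        simp [norm_smul, abs_of_nonneg ht.1.le]
      rw [hnorm] at hlip
      have hsub : ⟪f' (a + t • v) - f' a, v⟫ =
          ⟪f' (a + t • v), v⟫ - ⟪f' a, v⟫ := inner_sub_left _ _ _
      nlinarith [norm_nonneg v, norm_nonneg (f' (a + t • v) - f' a), ht.1.le]
  have := hanti (Set.left_mem_Icc.mpr zero_le_one) (Set.right_mem_Icc.mpr zero_le_one)
    zero_le_one
  have h0 : h 0 = f a := by simp [h]
  have h1 : h 1 = f (a + v) - ⟪f' a, v⟫ - L / 2 * ‖v‖ ^ 2 := by simp [h]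
  rw [h0, h1] at this
  linarith

theorem gd_convex_convergence {E : Type*} [NormedAddCommGroup E] [InnerProductSpace ℝ E]
    [CompleteSpace E]
    (f : E → ℝ) (f' : E → E) (L : ℝ) (hL : 0 < L)
    (hdiff : ∀ x, HasGradientAt f (f' x) x)
    (hconv : ConvexOn ℝ Set.univ f)
    (hsmooth : ∀ x y, ‖f' x - f' y‖ ≤ L * ‖x - y‖)
    (xstar : E) (hmin : ∀ y, f xstar ≤ f y)
    (x : ℕ → E)
    (hiter : ∀ k, x (k + 1) = x k - (1 / L) • f' (x k)) :
    ∀ n : ℕ, 1 ≤ n →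
      f (x n) - f xstar ≤ (L / (2 * n)) * ‖x 0 - xstar‖ ^ 2 := by
  have hL0 : L ≠ 0 := ne_of_gt hL
  set D : ℕ → ℝ := fun k => ‖x k - xstar‖ ^ 2 with hD
  -- per-step descent : f (x (k+1)) ≤ f (x k) - 1/(2L) ‖g‖²
  have hdesc : ∀ k, f (x (k+1)) ≤ f (x k) - 1 / (2 * L) * ‖f' (x k)‖ ^ 2 := by
    intro k
    have h1 : x (k+1) = x k + (-(1 / L) • f' (x k)) := by
      rw [hiter k]; module
    have h2 := smooth_descent f f' L hL hdiff hsmooth (x k) (-(1 / L) • f' (x k))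
    rw [← h1] at h2
    have hip : ⟪f' (x k), -(1 / L) • f' (x k)⟫ = -(1 / L) * ‖f' (x k)‖ ^ 2 := by
      rw [real_inner_smul_right, real_inner_self_eq_norm_sq]
    have hns : ‖-(1 / L) • f' (x k)‖ ^ 2 = (1 / L) ^ 2 * ‖f' (x k)‖ ^ 2 := by
      rw [norm_smul]
      rw [mul_pow]
      congr 1
      rw [norm_neg, Real.norm_eq_abs, abs_of_nonneg (by positivity), sq]
    rw [hip, hns] at h2
    have harith : -(1 / L) * ‖f' (x k)‖ ^ 2 + L / 2 * ((1 / L) ^ 2 * ‖f' (x k)‖ ^ 2)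
        = -(1 / (2 * L)) * ‖f' (x k)‖ ^ 2 := by
      field_simp
      ring
    linarith [h2, harith.le, harith.ge]
  -- convexity : f (x k) - f xstar ≤ ⟪g_k, x k - xstar⟫
  have hcvx : ∀ k, f (x k) - f xstar ≤ ⟪f' (x k), x k - xstar⟫ := by
    intro k
    have := grad_convex_ineq f f' hdiff hconv (x k) xstar
    have hflip : ⟪f' (x k), xstar - x k⟫ = -⟪f' (x k), x k - xstar⟫ := by
      rw [← inner_neg_right]; congr 1; abel
    rw [hflip] at this
    linarith
  -- key per-step inequality
  have hkey : ∀ k, f (x (k+1)) - f xstar ≤ L / 2 * (D k - D (k+1)) := by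
    intro k
    have hDexp : D (k+1) = D k - 2 / L * ⟪f' (x k), x k - xstar⟫ + 1 / L ^ 2 * ‖f' (x k)‖ ^ 2 := by
      have h1 : x (k+1) - xstar = (x k - xstar) + (-(1 / L) • f' (x k)) := by
        rw [hiter k]; module
      have h2 : D (k+1) = ‖(x k - xstar) + (-(1 / L) • f' (x k))‖ ^ 2 := by
        simp only [hD]
        rw [h1]
      rw [h2, norm_add_sq_real]
      have hip : ⟪x k - xstar, -(1 / L) • f' (x k)⟫ = -(1 / L) * ⟪f' (x k), x k - xstar⟫ := by
        rw [real_inner_smul_right, real_inner_comm]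
      have hns : ‖-(1 / L) • f' (x k)‖ ^ 2 = 1 / L ^ 2 * ‖f' (x k)‖ ^ 2 := by
        rw [norm_smul, mul_pow, norm_neg, Real.norm_eq_abs,
          abs_of_nonneg (by positivity : (0:ℝ) ≤ 1 / L)]
        field_simp
      rw [hip, hns]
      simp only [hD]
      ring
    have h3 : f (x (k+1)) - f xstar ≤
        ⟪f' (x k), x k - xstar⟫ - 1 / (2 * L) * ‖f' (x k)‖ ^ 2 := by
      have := hdesc k
      have := hcvx k
      linarith
    have h4 : L / 2 * (D k - D (k+1)) =
        ⟪f' (x k), x k - xstar⟫ - 1 / (2 * L) * ‖f' (x k)‖ ^ 2 := by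
      rw [hDexp]
      field_simp
      ring
    linarith
  -- monotone decrease of f along iterates
  have hmono : ∀ j k, j ≤ k → f (x k) ≤ f (x j) := by
    intro j k hjk
    induction k with
    | zero => simp_all
    | succ m ih =>
      rcases Nat.lt_or_ge j (m+1) with h | h
      · have := ih (Nat.lt_succ_iff.mp h)
        have hd := hdesc m
        have hs : 0 ≤ 1 / (2 * L) * ‖f' (x m)‖ ^ 2 := by positivity
        linarith
      · have : j = m + 1 := le_antisymm hjk h
        simp [this]
  intro n hn
  have hnpos : (0:ℝ) < n := by exact_mod_cast hn
  -- sum inequality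
  have hsum : ∑ k ∈ Finset.range n, (f (x (k+1)) - f xstar) ≤ L / 2 * D 0 := by
    calc ∑ k ∈ Finset.range n, (f (x (k+1)) - f xstar)
        ≤ ∑ k ∈ Finset.range n, (L / 2 * (D k - D (k+1))) :=
          Finset.sum_le_sum (fun k _ => hkey k)
      _ = L / 2 * (D 0 - D n) := by
          rw [← Finset.mul_sum, Finset.sum_range_sub' D]
      _ ≤ L / 2 * D 0 := by
          have : (0:ℝ) ≤ D n := by positivity
          nlinarith
  have hlb : (n : ℝ) * (f (x n) - f xstar) ≤
      ∑ k ∈ Finset.range n, (f (x (k+1)) - f xstar) := by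
    have : ∀ k ∈ Finset.range n, f (x n) - f xstar ≤ f (x (k+1)) - f xstar := by
      intro k hk
      have hkn : k + 1 ≤ n := Finset.mem_range.mp hk
      linarith [hmono (k+1) n hkn]
    calc (n : ℝ) * (f (x n) - f xstar)
        = ∑ _k ∈ Finset.range n, (f (x n) - f xstar) := by
          rw [Finset.sum_const, Finset.card_range, nsmul_eq_mul]
      _ ≤ ∑ k ∈ Finset.range n, (f (x (k+1)) - f xstar) := Finset.sum_le_sum this
  have hfinal : (n : ℝ) * (f (x n) - f xstar) ≤ L / 2 * D 0 := le_trans hlb hsum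
  rw [div_mul_eq_mul_div, le_div_iff₀ (by positivity)]
  rw [hD] at hfinal
  nlinarith [hfinal]
end

section
/- Let f : E → ℝ be differentiable, L-smooth, and μ-strongly convex with 0 < μ ≤ L, and let x* ∈ E be a global minimizer of f. Let x : ℕ → E be the gradient descent sequence with constant step size λ = 1/L. Then for every k ≥ 0, ‖x_{k+1} - x*‖² ≤ (1 - μ/L)·‖x_k - x*‖². -/
open RealInnerProductSpace

lemma descent_lemma {E : Type*} [NormedAddCommGroup E] [InnerProductSpace ℝ E]
    [CompleteSpace E]
    (f : E → ℝ) (f' : E → E) (L : ℝ) (hL : 0 < L)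
    (hdiff : ∀ x, HasGradientAt f (f' x) x)
    (hsmooth : ∀ x y, ‖f' x - f' y‖ ≤ L * ‖x - y‖)
    (x y : E) : f y ≤ f x + ⟪f' x, y - x⟫ + L / 2 * ‖y - x‖ ^ 2 := by
  set v := y - x with hv
  set φ : ℝ → ℝ := fun t => f (x + t • v) - t * ⟪f' x, v⟫ - L / 2 * t ^ 2 * ‖v‖ ^ 2 with hφ
  have hderiv : ∀ t : ℝ, HasDerivAt φ
      (⟪f' (x + t • v), v⟫ - ⟪f' x, v⟫ - L * t * ‖v‖ ^ 2) t := by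
    intro t
    have hc : HasDerivAt (fun t : ℝ => x + t • v) v t := by
      simpa using ((hasDerivAt_id t).smul_const v).const_add x
    have h1 : HasDerivAt (fun t : ℝ => f (x + t • v)) ⟪f' (x + t • v), v⟫ t := by
      have := ((hdiff (x + t • v)).hasFDerivAt).comp_hasDerivAt t hc
      simp [InnerProductSpace.toDual_apply_apply] at this
      exact this
    have h2 : HasDerivAt (fun t : ℝ => t * ⟪f' x, v⟫) ⟪f' x, v⟫ t := by
      simpa using (hasDerivAt_id t).mul_const (⟪f' x, v⟫)
    have h3 : HasDerivAt (fun t : ℝ => L / 2 * t ^ 2 * ‖v‖ ^ 2) (L * t * ‖v‖ ^ 2) t := by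
      have := ((hasDerivAt_pow 2 t).const_mul (L / 2)).mul_const (‖v‖ ^ 2)
      exact this.congr_deriv (by ring)
    have := (h1.sub h2).sub h3
    rw [hφ]
    exact this
  have hanti : AntitoneOn φ (Set.Icc 0 1) := by
    apply antitoneOn_of_deriv_nonpos (convex_Icc 0 1)
    · exact fun t _ => (hderiv t).continuousAt.continuousWithinAt
    · intro t _
      exact (hderiv t).differentiableAt.differentiableWithinAt
    · intro t ht
      rw [interior_Icc] at ht
      rw [(hderiv t).deriv]
      have hbound : ⟪f' (x + t • v) - f' x, v⟫ ≤ L * t * ‖v‖ ^ 2 := by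
        calc ⟪f' (x + t • v) - f' x, v⟫ ≤ ‖f' (x + t • v) - f' x‖ * ‖v‖ :=
              real_inner_le_norm _ _
          _ ≤ L * ‖(x + t • v) - x‖ * ‖v‖ := by
              have := hsmooth (x + t • v) x
              nlinarith [norm_nonneg v]
          _ = L * t * ‖v‖ ^ 2 := by
              rw [add_sub_cancel_left, norm_smul, Real.norm_eq_abs,
                abs_of_pos ht.1]
              ring
      rw [inner_sub_left] at hbound
      linarith
  have h := hanti (Set.left_mem_Icc.2 zero_le_one) (Set.right_mem_Icc.2 zero_le_one)
    zero_le_one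
  have hxy : x + v = y := by rw [hv]; abel
  simp only [hφ, zero_smul, add_zero, one_smul, hxy] at h
  norm_num at h
  linarith

theorem gd_strongly_convex_contraction {E : Type*} [NormedAddCommGroup E]
    [InnerProductSpace ℝ E] [CompleteSpace E]
    (f : E → ℝ) (f' : E → E) (L μ : ℝ) (hμ : 0 < μ) (hμL : μ ≤ L)
    (hdiff : ∀ x, HasGradientAt f (f' x) x)
    (hsmooth : ∀ x y, ‖f' x - f' y‖ ≤ L * ‖x - y‖)
    (hstrong : ∀ x y, f x + ⟪f' x, y - x⟫ + (μ / 2) * ‖y - x‖ ^ 2 ≤ f y)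
    (xstar : E) (hmin : ∀ y, f xstar ≤ f y)
    (x : ℕ → E)
    (hiter : ∀ k, x (k + 1) = x k - (1 / L) • f' (x k)) :
    ∀ k : ℕ, ‖x (k + 1) - xstar‖ ^ 2 ≤ (1 - μ / L) * ‖x k - xstar‖ ^ 2 := by
  have hL : 0 < L := lt_of_lt_of_le hμ hμL
  intro k
  set g := f' (x k) with hg
  set a := x k - xstar with ha
  -- sufficient decrease: f xk - f xstar ≥ ‖g‖²/(2L)
  have hsd : (1 / (2 * L)) * ‖g‖ ^ 2 ≤ f (x k) - f xstar := by
    have h1 := descent_lemma f f' L hL hdiff hsmooth (x k) (x k - (1 / L) • g)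
    have h2 := hmin (x k - (1 / L) • g)
    have hin : ⟪g, (x k - (1 / L) • g) - x k⟫ = -(1 / L) * ‖g‖ ^ 2 := by
      simp [inner_smul_right, real_inner_self_eq_norm_sq]
    have hn : ‖(x k - (1 / L) • g) - x k‖ ^ 2 = (1 / L) ^ 2 * ‖g‖ ^ 2 := by
      rw [sub_sub_cancel_left, norm_neg, norm_smul, mul_pow, Real.norm_eq_abs, sq_abs]
    rw [hin, hn] at h1
    have e1 : L / 2 * ((1 / L) ^ 2 * ‖g‖ ^ 2) = 1 / (2 * L) * ‖g‖ ^ 2 := by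
      field_simp
    have e2 : (1 / L) * ‖g‖ ^ 2 = 2 * (1 / (2 * L) * ‖g‖ ^ 2) := by
      field_simp
    linarith
  -- strong convexity at xk, xstar
  have hsc : f (x k) - f xstar + μ / 2 * ‖a‖ ^ 2 ≤ ⟪g, a⟫ := by
    have := hstrong (x k) xstar
    have hxs : xstar - x k = -a := by rw [ha]; abel
    rw [hxs, inner_neg_right, norm_neg] at this
    linarith
  -- expand the norm
  have hexp : ‖a - (1 / L) • g‖ ^ 2 =
      ‖a‖ ^ 2 - 2 * (1 / L) * ⟪g, a⟫ + (1 / L) ^ 2 * ‖g‖ ^ 2 := by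
    rw [norm_sub_sq_real, inner_smul_right, norm_smul, real_inner_comm, mul_pow,
      Real.norm_eq_abs, sq_abs]
    ring
  have hx1 : x (k + 1) - xstar = a - (1 / L) • g := by
    rw [hiter k, ha]; abel
  rw [hx1, hexp]
  have key : (1 / (2 * L)) * ‖g‖ ^ 2 + μ / 2 * ‖a‖ ^ 2 ≤ ⟪g, a⟫ := by linarith
  have key2 := mul_le_mul_of_nonneg_left key
    (le_of_lt (by positivity : (0:ℝ) < 2 * (1 / L)))
  have e1 : 2 * (1 / L) * ((1 / (2 * L)) * ‖g‖ ^ 2 + μ / 2 * ‖a‖ ^ 2)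
      = (1 / L) ^ 2 * ‖g‖ ^ 2 + (μ / L) * ‖a‖ ^ 2 := by
    field_simp
  have e2 : (1 - μ / L) * ‖a‖ ^ 2 = ‖a‖ ^ 2 - (μ / L) * ‖a‖ ^ 2 := by ring
  rw [e1] at key2
  rw [e2]
  linarith
end

section
/- Let f : E → ℝ be differentiable and convex, let g : E → ℝ be convex and continuous, and let λ > 0. Then x* ∈ E is a global minimizer of F = f + g if and only if x* is a global minimizer over y ∈ E of the function y ↦ (1/(2λ))·‖y - (x* - λ·∇f(x*))‖² + g(y). -/
open RealInnerProductSpace Filter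

lemma grad_line_tendsto {E : Type*} [NormedAddCommGroup E] [InnerProductSpace ℝ E] [CompleteSpace E]
    (f : E → ℝ) (p x v : E) (hf : HasGradientAt f p x) :
    Tendsto (fun t : ℝ => (f (x + t • v) - f x) / t) (nhdsWithin 0 (Set.Ioi 0))
      (nhds (⟪p, v⟫)) := by
  have hF : HasFDerivAt f (InnerProductSpace.toDual ℝ E p) x := hf.hasFDerivAt
  have hφ : HasDerivAt (fun t : ℝ => x + t • v) v 0 := by
    simpa using ((hasDerivAt_id (0:ℝ)).smul_const v).const_add x
  have comp : HasDerivAt (fun t : ℝ => f (x + t • v)) (⟪p, v⟫) 0 := by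
    have hF' : HasFDerivAt f ((InnerProductSpace.toDual ℝ E) p) ((fun t : ℝ => x + t • v) 0) := by
      simpa using hF
    have h := hF'.comp_hasDerivAt 0 hφ
    exact h
  rw [hasDerivAt_iff_tendsto_slope] at comp
  have := comp.mono_left (nhdsWithin_mono _ (by
    intro t ht
    exact Set.mem_compl_singleton_iff.mpr (ne_of_gt ht)))
  refine this.congr (fun t => ?_)
  simp [slope_def_field, div_eq_inv_mul]

theorem prox_fixed_point_iff_minimizer {E : Type*} [NormedAddCommGroup E]
    [InnerProductSpace ℝ E] [CompleteSpace E]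
    (f g : E → ℝ) (f' : E → E)
    (hdiff : ∀ x, HasGradientAt f (f' x) x)
    (hfconv : ConvexOn ℝ Set.univ f)
    (hgconv : ConvexOn ℝ Set.univ g) (hgcont : Continuous g)
    (lam : ℝ) (hlam : 0 < lam) (xstar : E) :
    (∀ y : E, f xstar + g xstar ≤ f y + g y) ↔
      (∀ y : E,
        (1 / (2 * lam)) * ‖xstar - (xstar - lam • f' xstar)‖ ^ 2 + g xstar ≤
          (1 / (2 * lam)) * ‖y - (xstar - lam • f' xstar)‖ ^ 2 + g y) := by
  set p := f' xstar with hp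
  -- algebra identity
  have key : ∀ y : E, (1 / (2 * lam)) * ‖y - (xstar - lam • p)‖ ^ 2 =
      (1 / (2 * lam)) * ‖y - xstar‖ ^ 2 + ⟪p, y - xstar⟫ + (lam / 2) * ‖p‖ ^ 2 := by
    intro y
    have h1 : y - (xstar - lam • p) = (y - xstar) + lam • p := by abel
    rw [h1, norm_add_sq_real, real_inner_smul_right, norm_smul, Real.norm_eq_abs,
      abs_of_pos hlam, real_inner_comm]
    field_simp
  -- gradient inequality for convex f
  have gradineq : ∀ y : E, f xstar + ⟪p, y - xstar⟫ ≤ f y := by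
    intro y
    have htend := grad_line_tendsto f p xstar (y - xstar) (hdiff xstar)
    have hev : ∀ᶠ t in nhdsWithin (0:ℝ) (Set.Ioi 0),
        (f (xstar + t • (y - xstar)) - f xstar) / t ≤ f y - f xstar := by
      filter_upwards [Ioc_mem_nhdsGT_of_mem (Set.left_mem_Ico.mpr one_pos)] with t ht
      obtain ⟨ht0, ht1⟩ := ht
      have hc := hfconv.2 (Set.mem_univ xstar) (Set.mem_univ y)
        (show (0:ℝ) ≤ 1 - t by linarith) (le_of_lt ht0) (show (1 - t) + t = 1 by ring)
      have heq : (1 - t) • xstar + t • y = xstar + t • (y - xstar) := by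
        simp [smul_sub, sub_smul, one_smul]; abel
      simp only [smul_eq_mul] at hc
      rw [heq] at hc
      rw [div_le_iff₀ ht0]
      nlinarith [hc]
    have := le_of_tendsto htend hev
    linarith
  -- the key condition C
  constructor
  · intro hmin y
    -- derive C : g xstar ≤ ⟪p, y - xstar⟫ + g y
    have hC : g xstar ≤ ⟪p, y - xstar⟫ + g y := by
      have htend := grad_line_tendsto f p xstar (y - xstar) (hdiff xstar)
      have hev : ∀ᶠ t in nhdsWithin (0:ℝ) (Set.Ioi 0),
          g xstar - g y ≤ (f (xstar + t • (y - xstar)) - f xstar) / t := by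
        filter_upwards [Ioc_mem_nhdsGT_of_mem (Set.left_mem_Ico.mpr one_pos)] with t ht
        obtain ⟨ht0, ht1⟩ := ht
        have hc := hgconv.2 (Set.mem_univ xstar) (Set.mem_univ y)
          (show (0:ℝ) ≤ 1 - t by linarith) (le_of_lt ht0) (show (1 - t) + t = 1 by ring)
        have heq : (1 - t) • xstar + t • y = xstar + t • (y - xstar) := by
          simp [smul_sub, sub_smul, one_smul]; abel
        simp only [smul_eq_mul] at hc
        rw [heq] at hc
        have hm := hmin (xstar + t • (y - xstar))
        rw [le_div_iff₀ ht0]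
        nlinarith [hc, hm]
      have := ge_of_tendsto htend hev
      linarith
    rw [key, key]
    have h0 : (1 / (2 * lam)) * ‖xstar - xstar‖ ^ 2 = 0 := by simp
    have hinner0 : ⟪p, xstar - xstar⟫ = 0 := by simp
    have hy2 : 0 ≤ (1 / (2 * lam)) * ‖y - xstar‖ ^ 2 := by positivity
    rw [h0, hinner0] at *
    nlinarith [hy2]
  · intro hprox y
    -- first derive (*) : g xstar ≤ (1/(2lam))‖y-x‖² + ⟪p, y-x⟫ + g y for all y
    have hstar : ∀ z : E, g xstar ≤ (1 / (2 * lam)) * ‖z - xstar‖ ^ 2 + ⟪p, z - xstar⟫ + g z := by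
      intro z
      have h := hprox z
      rw [key, key] at h
      have h0 : ((1:ℝ) / (2 * lam)) * ‖xstar - xstar‖ ^ 2 = 0 := by simp
      have hinner0 : ⟪p, xstar - xstar⟫ = 0 := by simp
      rw [h0, hinner0] at h
      linarith
    -- then derive C via t → 0
    have hC : g xstar ≤ ⟪p, y - xstar⟫ + g y := by
      have hev : ∀ t : ℝ, 0 < t → t ≤ 1 →
          g xstar ≤ (t / (2 * lam)) * ‖y - xstar‖ ^ 2 + ⟪p, y - xstar⟫ + g y := by
        intro t ht0 ht1
        have hc := hgconv.2 (Set.mem_univ xstar) (Set.mem_univ y)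
          (show (0:ℝ) ≤ 1 - t by linarith) (le_of_lt ht0) (show (1 - t) + t = 1 by ring)
        have heq : (1 - t) • xstar + t • y = xstar + t • (y - xstar) := by
          simp [smul_sub, sub_smul, one_smul]; abel
        simp only [smul_eq_mul] at hc
        rw [heq] at hc
        have hs := hstar (xstar + t • (y - xstar))
        have hsub : xstar + t • (y - xstar) - xstar = t • (y - xstar) := by abel
        rw [hsub] at hs
        rw [norm_smul, real_inner_smul_right, Real.norm_eq_abs, abs_of_pos ht0] at hs
        have hlam2 : (0:ℝ) < 2 * lam := by linarith
        have ht2 : (1 / (2 * lam)) * (t * ‖y - xstar‖) ^ 2 =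
            t * ((t / (2 * lam)) * ‖y - xstar‖ ^ 2) := by field_simp
        rw [ht2] at hs
        -- hs : g xstar ≤ t*(...) + t * ⟪⟫ + g (xstar + t•(y-xstar))
        nlinarith [hc, hs]
      -- take limit t → 0+
      have htend : Tendsto (fun t : ℝ => (t / (2 * lam)) * ‖y - xstar‖ ^ 2 +
          ⟪p, y - xstar⟫ + g y) (nhdsWithin 0 (Set.Ioi 0))
          (nhds (⟪p, y - xstar⟫ + g y)) := by
        have : Tendsto (fun t : ℝ => (t / (2 * lam)) * ‖y - xstar‖ ^ 2 +
            ⟪p, y - xstar⟫ + g y) (nhds 0)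
            (nhds ((0 / (2 * lam)) * ‖y - xstar‖ ^ 2 + ⟪p, y - xstar⟫ + g y)) :=
          (Continuous.tendsto (by continuity) 0)
        simpa using this.mono_left nhdsWithin_le_nhds
      refine ge_of_tendsto htend ?_
      filter_upwards [Ioc_mem_nhdsGT_of_mem (Set.left_mem_Ico.mpr one_pos)] with t ht
      exact hev t ht.1 ht.2
    have := gradineq y
    linarith
end

section
/- Let f : E → ℝ be differentiable, convex, and L-smooth with L > 0, let g : E → ℝ be convex and continuous, and let 0 < λ ≤ 1/L. Let x_k ∈ E and let x_{k+1} be a global minimizer over y ∈ E of y ↦ (1/(2λ))·‖y - (x_k - λ·∇f(x_k))‖² + g(y). Then with F = f + g, F(x_{k+1}) ≤ F(x_k) - (1/(2λ))·‖x_{k+1} - x_k‖²; in particular the proximal gradient iteration produces monotonically non-increasing values of F. -/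
open RealInnerProductSpace

lemma aux_comb_norm_sq {E : Type*} [NormedAddCommGroup E] [InnerProductSpace ℝ E]
    (a b : E) (t : ℝ) :
    ‖a + t • (b - a)‖^2 = (1 - t) * ‖a‖^2 + t * ‖b‖^2 - t * (1 - t) * ‖a - b‖^2 := by
  have h1 : ‖a + t • (b - a)‖^2 = ‖a‖^2 + 2 * (t * ⟪a, b - a⟫) + t^2 * ‖b - a‖^2 := by
    rw [@norm_add_sq_real, real_inner_smul_right, norm_smul]
    rw [Real.norm_eq_abs, mul_pow, sq_abs]
  have h2 : ‖b‖^2 = ‖a‖^2 + 2 * ⟪a, b - a⟫ + ‖b - a‖^2 := by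
    have := norm_add_sq_real a (b - a)
    simpa using this
  have h3 : ‖a - b‖ = ‖b - a‖ := norm_sub_rev a b
  rw [h1, h2, h3]; ring

lemma aux_descent {E : Type*} [NormedAddCommGroup E] [InnerProductSpace ℝ E] [CompleteSpace E]
    (f : E → ℝ) (f' : E → E) (L : ℝ) (hL : 0 < L)
    (hdiff : ∀ x, HasGradientAt f (f' x) x)
    (hsmooth : ∀ x y, ‖f' x - f' y‖ ≤ L * ‖x - y‖) (x y : E) :
    f y ≤ f x + ⟪f' x, y - x⟫ + L/2 * ‖y - x‖^2 := by
  set d := y - x with hd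
  have hline : ∀ t : ℝ, HasDerivAt (fun s : ℝ => f (x + s • d)) ⟪f' (x + t • d), d⟫ t := by
    intro t
    have h1 : HasDerivAt (fun s : ℝ => x + s • d) d t := by
      simpa using ((hasDerivAt_id t).smul_const d).const_add x
    have h2 := (hdiff (x + t • d)).hasFDerivAt
    have := h2.comp_hasDerivAt t h1
    simp at this; exact this
  have hcf' : Continuous f' := by
    have : LipschitzWith ⟨L, hL.le⟩ f' := by
      apply LipschitzWith.of_dist_le_mul
      intro a b
      simp only [dist_eq_norm]; exact hsmooth a b
    exact this.continuous
  have hcont : Continuous fun t : ℝ => ⟪f' (x + t • d), d⟫ := by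
    exact Continuous.inner (hcf'.comp (by continuity)) continuous_const
  have key : ∫ t in (0:ℝ)..1, ⟪f' (x + t • d), d⟫ = f y - f x := by
    have := intervalIntegral.integral_eq_sub_of_hasDerivAt (f := fun s : ℝ => f (x + s • d))
      (fun t _ => hline t) (hcont.intervalIntegrable 0 1)
    simpa [hd] using this
  have hmono : ∫ t in (0:ℝ)..1, (⟪f' (x + t • d), d⟫ - ⟪f' x, d⟫) ≤
      ∫ t in (0:ℝ)..1, L * ‖d‖^2 * t := by
    apply intervalIntegral.integral_mono_on zero_le_one
    · exact ((hcont.sub continuous_const).intervalIntegrable 0 1)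
    · exact ((continuous_const.mul continuous_id).intervalIntegrable 0 1)
    · intro t ht
      have h1 : ⟪f' (x + t • d), d⟫ - ⟪f' x, d⟫ = ⟪f' (x + t • d) - f' x, d⟫ := by
        rw [inner_sub_left]
      rw [h1]
      calc ⟪f' (x + t • d) - f' x, d⟫ ≤ ‖f' (x + t • d) - f' x‖ * ‖d‖ :=
            real_inner_le_norm _ _
        _ ≤ (L * ‖(x + t • d) - x‖) * ‖d‖ := by
            gcongr; exact hsmooth _ _
        _ = L * ‖d‖^2 * t := by
            simp [norm_smul, abs_of_nonneg ht.1]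
            ring
  have hI1 : ∫ t in (0:ℝ)..1, L * ‖d‖^2 * t = L/2 * ‖d‖^2 := by
    rw [intervalIntegral.integral_const_mul, integral_id]
    ring
  have hI2 : ∫ t in (0:ℝ)..1, (⟪f' (x + t • d), d⟫ - ⟪f' x, d⟫) =
      (f y - f x) - ⟪f' x, d⟫ := by
    rw [intervalIntegral.integral_sub (hcont.intervalIntegrable 0 1)
      (intervalIntegrable_const), key]
    simp
  rw [hI1, hI2] at hmono
  linarith

theorem prox_gd_sufficient_decrease {E : Type*} [NormedAddCommGroup E]
    [InnerProductSpace ℝ E] [CompleteSpace E]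
    (f g : E → ℝ) (f' : E → E) (L : ℝ) (hL : 0 < L)
    (hdiff : ∀ x, HasGradientAt f (f' x) x)
    (hfconv : ConvexOn ℝ Set.univ f)
    (hsmooth : ∀ x y, ‖f' x - f' y‖ ≤ L * ‖x - y‖)
    (hgconv : ConvexOn ℝ Set.univ g) (hgcont : Continuous g)
    (lam : ℝ) (hlam : 0 < lam) (hlamL : lam ≤ 1 / L)
    (xk xk1 : E)
    (hprox : ∀ y : E,
      (1 / (2 * lam)) * ‖xk1 - (xk - lam • f' xk)‖ ^ 2 + g xk1 ≤
        (1 / (2 * lam)) * ‖y - (xk - lam • f' xk)‖ ^ 2 + g y)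
    (F : E → ℝ) (hF : F = fun y => f y + g y) :
    F xk1 ≤ F xk - (1 / (2 * lam)) * ‖xk1 - xk‖ ^ 2 := by
  have hc : (0:ℝ) < 1 / (2 * lam) := by positivity
  set c : ℝ := 1 / (2 * lam) with hcdef
  set v : E := xk - lam • f' xk with hv
  -- strong prox inequality
  have hstrong : c * ‖xk1 - v‖^2 + g xk1 + c * ‖xk1 - xk‖^2 ≤ c * ‖xk - v‖^2 + g xk := by
    have key : ∀ t : ℝ, 0 < t → t ≤ 1 →
        c * (1 - t) * ‖xk1 - xk‖^2 ≤
          (c * ‖xk - v‖^2 + g xk) - (c * ‖xk1 - v‖^2 + g xk1) := by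
      intro t ht0 ht1
      have hyt := hprox (xk1 + t • (xk - xk1))
      have hnorm : ‖(xk1 + t • (xk - xk1)) - v‖^2 =
          (1 - t) * ‖xk1 - v‖^2 + t * ‖xk - v‖^2 - t * (1 - t) * ‖xk1 - xk‖^2 := by
        have := aux_comb_norm_sq (xk1 - v) (xk - v) t
        have he : (xk1 - v) + t • ((xk - v) - (xk1 - v)) = (xk1 + t • (xk - xk1)) - v := by
          rw [sub_sub_sub_cancel_right]
          abel
        rw [he] at this
        rw [this, sub_sub_sub_cancel_right]
      have hgle : g (xk1 + t • (xk - xk1)) ≤ (1 - t) * g xk1 + t * g xk := by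
        have := hgconv.2 (Set.mem_univ xk1) (Set.mem_univ xk)
          (by linarith : (0:ℝ) ≤ 1 - t) ht0.le (by ring)
        have he : (1 - t) • xk1 + t • xk = xk1 + t • (xk - xk1) := by
          module
        rw [he] at this
        simpa using this
      have hne : c * ‖xk1 - v‖^2 + g xk1 ≤
          (1 - t) * (c * ‖xk1 - v‖^2 + g xk1) + t * (c * ‖xk - v‖^2 + g xk)
            - c * (t * (1 - t)) * ‖xk1 - xk‖^2 := by
        calc c * ‖xk1 - v‖^2 + g xk1
            ≤ c * ‖(xk1 + t • (xk - xk1)) - v‖^2 + g (xk1 + t • (xk - xk1)) := hyt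
          _ ≤ _ := by rw [hnorm]; nlinarith [hgle]
      have := hne
      nlinarith [this]
    -- take t → 0
    have hlim : c * ‖xk1 - xk‖^2 ≤
        (c * ‖xk - v‖^2 + g xk) - (c * ‖xk1 - v‖^2 + g xk1) := by
      by_contra hcon
      push_neg at hcon
      set Δ := (c * ‖xk - v‖^2 + g xk) - (c * ‖xk1 - v‖^2 + g xk1) with hΔ
      set ε := c * ‖xk1 - xk‖^2 - Δ with hε
      have hε0 : 0 < ε := by simp [hε]; linarith
      have hx0 : 0 < c * ‖xk1 - xk‖^2 + 1 := by positivity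
      set t := min 1 (ε / (c * ‖xk1 - xk‖^2 + 1)) with htdef
      have ht0 : 0 < t := lt_min one_pos (by positivity)
      have ht1 : t ≤ 1 := min_le_left _ _
      have hk := key t ht0 ht1
      have htb : t * (c * ‖xk1 - xk‖^2) ≤ ε := by
        have h1 : t ≤ ε / (c * ‖xk1 - xk‖^2 + 1) := min_le_right _ _
        have h2 : t * (c * ‖xk1 - xk‖^2 + 1) ≤ ε := by
          calc t * (c * ‖xk1 - xk‖^2 + 1)
              ≤ (ε / (c * ‖xk1 - xk‖^2 + 1)) * (c * ‖xk1 - xk‖^2 + 1) := by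
                apply mul_le_mul_of_nonneg_right h1 hx0.le
            _ = ε := by field_simp
        nlinarith [ht0]
      have : c * (1 - t) * ‖xk1 - xk‖^2 = c * ‖xk1 - xk‖^2 - t * (c * ‖xk1 - xk‖^2) := by
        ring
      rw [this] at hk
      -- hk : c‖d‖² - t(c‖d‖²) ≤ Δ = c‖d‖² - ε, so ε ≤ t(c‖d‖²) ≤ ε, but strict...
      have : ε ≤ t * (c * ‖xk1 - xk‖^2) := by
        have : Δ = c * ‖xk1 - xk‖^2 - ε := by rw [hε]; ring
        linarith [hk, this.ge.trans_eq rfl]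
      -- need strictness: t*(c‖d‖²) < ε unless... use that ε ≤ t*c‖d‖² and t*c‖d‖² ≤ ε*(c‖d‖²)/(c‖d‖²+1) < ε
      have hstrict : t * (c * ‖xk1 - xk‖^2) < ε := by
        calc t * (c * ‖xk1 - xk‖^2)
            ≤ (ε / (c * ‖xk1 - xk‖^2 + 1)) * (c * ‖xk1 - xk‖^2) := by
              apply mul_le_mul_of_nonneg_right (min_le_right _ _) (by positivity)
          _ < ε := by
              rw [div_mul_eq_mul_div, div_lt_iff₀ hx0]
              nlinarith
      linarith
    linarith
  -- expansion: xk1 - v = (xk1 - xk) + lam • f' xk, xk - v = lam • f' xk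
  have hexp1 : ‖xk1 - v‖^2 = ‖xk1 - xk‖^2 + 2 * lam * ⟪f' xk, xk1 - xk⟫
      + lam^2 * ‖f' xk‖^2 := by
    have he : xk1 - v = (xk1 - xk) + lam • f' xk := by rw [hv]; abel
    rw [he, @norm_add_sq_real, real_inner_smul_right, norm_smul, Real.norm_eq_abs,
      mul_pow, sq_abs, real_inner_comm]
    ring
  have hexp2 : ‖xk - v‖^2 = lam^2 * ‖f' xk‖^2 := by
    have he : xk - v = lam • f' xk := by rw [hv]; abel
    rw [he, norm_smul, Real.norm_eq_abs, mul_pow, sq_abs]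
  have hclam : c * (2 * lam) = 1 := by
    rw [hcdef]; field_simp
  -- from hstrong: g xk1 + ⟪f' xk, xk1-xk⟫ + 2c‖d‖² ≤ g xk
  have hg : g xk1 + ⟪f' xk, xk1 - xk⟫ + 2 * c * ‖xk1 - xk‖^2 ≤ g xk := by
    rw [hexp1, hexp2] at hstrong
    nlinarith [hstrong]
  have hdes := aux_descent f f' L hL hdiff hsmooth xk xk1
  have hLc : L / 2 ≤ c := by
    rw [hcdef]
    rw [div_le_div_iff₀ (by norm_num) (by positivity)]
    have : lam * L ≤ 1 := (le_div_iff₀ hL).mp hlamL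
    nlinarith
  have hd2 : (0:ℝ) ≤ ‖xk1 - xk‖^2 := by positivity
  rw [hF]
  simp only
  nlinarith [hdes, hg]
end

section
/- Let f : E → ℝ be differentiable, L-smooth, and μ-strongly convex with 0 < μ ≤ L, let g : E → ℝ be convex and continuous, let 0 < λ ≤ 1/L, and let x* ∈ E be a global minimizer of F = f + g. Let x_k ∈ E, let x_{k+1} be a global minimizer over y ∈ E of y ↦ (1/(2λ))·‖y - (x_k - λ·∇f(x_k))‖² + g(y), and set G = (1/λ)·(x_k - x_{k+1}). Then ‖x_k - x*‖ ≤ (2/μ)·‖G‖. -/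
open RealInnerProductSpace

set_option maxHeartbeats 1000000

theorem prox_gd_distance_bound_by_generalized_gradient {E : Type*} [NormedAddCommGroup E]
    [InnerProductSpace ℝ E] [CompleteSpace E]
    (f g : E → ℝ) (f' : E → E) (L μ : ℝ) (hμ : 0 < μ) (hμL : μ ≤ L)
    (hdiff : ∀ x, HasGradientAt f (f' x) x)
    (hsmooth : ∀ x y, ‖f' x - f' y‖ ≤ L * ‖x - y‖)
    (hstrong : ∀ x y, f x + ⟪f' x, y - x⟫ + (μ / 2) * ‖y - x‖ ^ 2 ≤ f y)
    (hgconv : ConvexOn ℝ Set.univ g) (hgcont : Continuous g)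
    (lam : ℝ) (hlam : 0 < lam) (hlamL : lam ≤ 1 / L)
    (F : E → ℝ) (hF : F = fun y => f y + g y)
    (xstar : E) (hmin : ∀ y, F xstar ≤ F y)
    (xk xk1 : E)
    (hprox : ∀ y : E,
      (1 / (2 * lam)) * ‖xk1 - (xk - lam • f' xk)‖ ^ 2 + g xk1 ≤
        (1 / (2 * lam)) * ‖y - (xk - lam • f' xk)‖ ^ 2 + g y)
    (G : E) (hG : G = (1 / lam) • (xk - xk1)) :
    ‖xk - xstar‖ ≤ (2 / μ) * ‖G‖ := by
  have hL : (0:ℝ) < L := lt_of_lt_of_le hμ hμL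
  have hlamne : lam ≠ 0 := hlam.ne'
  have hxk1 : xk - xk1 = lam • G := by
    rw [hG, smul_smul, mul_one_div, div_self hlamne, one_smul]
  -- subgradient inequality for g at xk1
  have hsub : ∀ y : E, g xk1 + ⟪G - f' xk, y - xk1⟫ ≤ g y := by
    intro y
    set c := y - xk1 with hc
    set a := xk1 - (xk - lam • f' xk) with ha
    have hiac : ⟪G - f' xk, c⟫ = -((1/lam) * ⟪a, c⟫) := by
      have hgf : G - f' xk = (-(1/lam)) • a := by
        rw [hG, ha]
        match_scalars <;> field_simp
      rw [hgf, real_inner_smul_left]; ring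
    have hmain : ∀ t : ℝ, 0 < t → t ≤ 1 →
        g xk1 + ⟪G - f' xk, c⟫ - g y ≤ t * (‖c‖^2 / (2*lam)) := by
      intro t ht ht1
      have hp := hprox (xk1 + t • c)
      have heq : (xk1 + t • c) - (xk - lam • f' xk) = a + t • c := by
        rw [ha]; abel
      have hexp : ‖(xk1 + t • c) - (xk - lam • f' xk)‖^2
          = ‖a‖^2 + 2*t*⟪a, c⟫ + t^2*‖c‖^2 := by
        rw [heq, norm_add_sq_real, real_inner_smul_right, norm_smul,
          Real.norm_eq_abs, abs_of_pos ht, mul_pow]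
        ring
      have hconv : g (xk1 + t • c) ≤ (1-t) * g xk1 + t * g y := by
        have h := hgconv.2 (Set.mem_univ xk1) (Set.mem_univ y)
          (by linarith : (0:ℝ) ≤ 1 - t) ht.le (by ring)
        have he : (1-t) • xk1 + t • y = xk1 + t • c := by rw [hc]; module
        rwa [he] at h
      rw [hexp] at hp
      have hsplit : (1/(2*lam)) * (‖a‖^2 + 2*t*⟪a,c⟫ + t^2*‖c‖^2)
          = (1/(2*lam)) * ‖a‖^2 + t*((1/lam)*⟪a,c⟫) + t*(t*(‖c‖^2/(2*lam))) := by
        field_simp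
      have key : t * (g xk1 + ⟪G - f' xk, c⟫ - g y) ≤ t * (t * (‖c‖^2/(2*lam))) := by
        rw [hiac]
        nlinarith [hp, hconv, hsplit]
      exact le_of_mul_le_mul_left key ht
    by_contra hcon
    push_neg at hcon
    have hApos : 0 < g xk1 + ⟪G - f' xk, c⟫ - g y := by linarith
    set A := g xk1 + ⟪G - f' xk, c⟫ - g y with hA
    have hCpos : (0:ℝ) < ‖c‖^2/(2*lam) + 1 := by positivity
    set t := min 1 (A / (‖c‖^2/(2*lam) + 1)) with htdef
    have ht : 0 < t := lt_min one_pos (div_pos hApos hCpos)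
    have ht1 : t ≤ 1 := min_le_left _ _
    have hm := hmain t ht ht1
    have h2 : t * (‖c‖^2/(2*lam)) < A := by
      calc t * (‖c‖^2/(2*lam)) ≤ (A / (‖c‖^2/(2*lam)+1)) * (‖c‖^2/(2*lam)) := by
            exact mul_le_mul_of_nonneg_right (min_le_right _ _) (by positivity)
        _ < A := by
            rw [div_mul_eq_mul_div, div_lt_iff₀ hCpos]
            nlinarith [hApos, sq_nonneg ‖c‖]
    linarith
  -- abbreviations
  have hndsub : ‖xstar - xk‖ = ‖xk - xstar‖ := norm_sub_rev _ _
  -- key inner products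
  have h1 : f xk + ⟪f' xk, xstar - xk⟫ + (μ/2) * ‖xk - xstar‖^2 ≤ f xstar := by
    have := hstrong xk xstar
    rwa [hndsub] at this
  have h2 : f xk1 + lam * ⟪f' xk1, G⟫ + (μ/2) * (lam^2 * ‖G‖^2) ≤ f xk := by
    have := hstrong xk1 xk
    have e1 : xk - xk1 = lam • G := hxk1
    rw [e1, real_inner_smul_right, norm_smul, Real.norm_eq_abs, abs_of_pos hlam,
      mul_pow] at this
    linarith
  have h3 : g xk1 + (lam * ‖G‖^2 - ⟪G, xk - xstar⟫ - lam * ⟪f' xk, G⟫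
      + ⟪f' xk, xk - xstar⟫) ≤ g xstar := by
    have := hsub xstar
    have e2 : xstar - xk1 = lam • G - (xk - xstar) := by
      have : xstar - xk1 = (xk - xk1) - (xk - xstar) := by abel
      rw [this, hxk1]
    simp only [e2, inner_sub_left, inner_sub_right, real_inner_smul_right,
      real_inner_self_eq_norm_sq] at this ⊢
    linarith [this]
  have h4 : f xstar + g xstar ≤ f xk1 + g xk1 := by
    have := hmin xk1
    rw [hF] at this
    exact this
  have h5 : -(L * lam^2 * ‖G‖^2) ≤ lam * ⟪f' xk1, G⟫ - lam * ⟪f' xk, G⟫ := by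
    have hcs : ⟪f' xk - f' xk1, G⟫ ≤ ‖f' xk - f' xk1‖ * ‖G‖ := real_inner_le_norm _ _
    have hlip : ‖f' xk - f' xk1‖ ≤ L * ‖xk - xk1‖ := hsmooth xk xk1
    have hn : ‖xk - xk1‖ = lam * ‖G‖ := by
      rw [hxk1, norm_smul, Real.norm_eq_abs, abs_of_pos hlam]
    rw [hn] at hlip
    have h6 : ⟪f' xk - f' xk1, G⟫ ≤ L * (lam * ‖G‖) * ‖G‖ := by
      calc ⟪f' xk - f' xk1, G⟫ ≤ ‖f' xk - f' xk1‖ * ‖G‖ := hcs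
        _ ≤ L * (lam * ‖G‖) * ‖G‖ :=
            mul_le_mul_of_nonneg_right hlip (norm_nonneg _)
    rw [inner_sub_left] at h6
    nlinarith [h6, hlam]
  have hip : ⟪f' xk, xstar - xk⟫ = -⟪f' xk, xk - xstar⟫ := by
    rw [← inner_neg_right]; congr 1; abel
  have hcs2 : ⟪G, xk - xstar⟫ ≤ ‖G‖ * ‖xk - xstar‖ := real_inner_le_norm _ _
  have hlamL' : lam * L ≤ 1 := by
    have h := mul_le_mul_of_nonneg_right hlamL hL.le
    rwa [one_div, inv_mul_cancel₀ hL.ne'] at h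
  have ha1 : 0 ≤ lam * ‖G‖^2 - L * lam^2 * ‖G‖^2 := by
    nlinarith [mul_nonneg (mul_nonneg hlam.le (sq_nonneg ‖G‖)) (sub_nonneg.2 hlamL')]
  have ha2 : (0:ℝ) ≤ μ/2 * (lam^2 * ‖G‖^2) := by positivity
  have hkey : (μ/2) * ‖xk - xstar‖^2 ≤ ⟪G, xk - xstar⟫ := by
    linarith [h1, h2, h3, h4, h5, hip, ha1, ha2]
  have hnd0 : 0 ≤ ‖xk - xstar‖ := norm_nonneg _
  have hnG0 : 0 ≤ ‖G‖ := norm_nonneg _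
  rcases eq_or_lt_of_le hnd0 with h | h
  · rw [← h]; positivity
  · have hq : μ * ‖xk - xstar‖ ≤ 2 * ‖G‖ := by
      nlinarith [hkey.trans hcs2, h]
    rw [div_mul_eq_mul_div, le_div_iff₀ hμ]
    linarith
end

section
/- Let f : E → ℝ be differentiable, L-smooth, and μ-strongly convex with 0 < μ ≤ L, let g : E → ℝ be convex and continuous, let 0 < λ ≤ 1/L, and let x* ∈ E be a global minimizer of F = f + g. Let x_k ∈ E and let x_{k+1} be a global minimizer over y ∈ E of y ↦ (1/(2λ))·‖y - (x_k - λ·∇f(x_k))‖² + g(y). Then F(x_{k+1}) - F(x*) ≤ (1 + λμ/4)⁻¹·(F(x_k) - F(x*)). -/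
open RealInnerProductSpace

lemma descent_aux {E : Type*} [NormedAddCommGroup E] [InnerProductSpace ℝ E] [CompleteSpace E]
    (f : E → ℝ) (f' : E → E) (L : ℝ)
    (hdiff : ∀ x, HasGradientAt f (f' x) x)
    (hsmooth : ∀ x y, ‖f' x - f' y‖ ≤ L * ‖x - y‖) (x y : E) :
    f y ≤ f x + ⟪f' x, y - x⟫ + L / 2 * ‖y - x‖ ^ 2 := by
  set v := y - x with hv
  have hγ : ∀ t : ℝ, HasDerivAt (fun t : ℝ => x + t • v) v t := by
    intro t
    simpa using ((hasDerivAt_id t).smul_const v).const_add x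
  have hcomp : ∀ t : ℝ, HasDerivAt (fun t : ℝ => f (x + t • v)) ⟪f' (x + t • v), v⟫ t := by
    intro t
    have h1 : HasFDerivAt f (InnerProductSpace.toDual ℝ E (f' (x + t • v))) (x + t • v) :=
      hasGradientAt_iff_hasFDerivAt.mp (hdiff _)
    have h9 := h1.comp_hasDerivAt t (hγ t)
    simp at h9
    exact h9
  set h : ℝ → ℝ := fun t => f (x + t • v) - t * ⟪f' x, v⟫ - L / 2 * t ^ 2 * ‖v‖ ^ 2 with hh_def
  have hh : ∀ t : ℝ, HasDerivAt h (⟪f' (x + t • v), v⟫ - ⟪f' x, v⟫ - L * t * ‖v‖ ^ 2) t := by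
    intro t
    have h2 : HasDerivAt (fun t : ℝ => t * ⟪f' x, v⟫) ⟪f' x, v⟫ t := by
      simpa using (hasDerivAt_id t).mul_const ⟪f' x, v⟫
    have h3 : HasDerivAt (fun t : ℝ => L / 2 * t ^ 2 * ‖v‖ ^ 2) (L * t * ‖v‖ ^ 2) t := by
      have h4 := ((hasDerivAt_pow 2 t).const_mul (L / 2)).mul_const (‖v‖ ^ 2)
      refine h4.congr_deriv ?_
      norm_num only
      ring
    exact ((hcomp t).sub h2).sub h3
  have hanti : AntitoneOn h (Set.Icc (0:ℝ) 1) := by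
    apply antitoneOn_of_deriv_nonpos (convex_Icc 0 1)
    · exact fun t _ => (hh t).differentiableAt.continuousAt.continuousWithinAt
    · exact fun t _ => (hh t).differentiableAt.differentiableWithinAt
    · intro t ht
      rw [interior_Icc, Set.mem_Ioo] at ht
      rw [(hh t).deriv]
      have h5 : ⟪f' (x + t • v) - f' x, v⟫ ≤ ‖f' (x + t • v) - f' x‖ * ‖v‖ :=
        real_inner_le_norm _ _
      have h6 : ‖f' (x + t • v) - f' x‖ ≤ L * (t * ‖v‖) := by
        have := hsmooth (x + t • v) x
        simpa [norm_smul, abs_of_pos ht.1] using this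
      have h7 : ⟪f' (x + t • v) - f' x, v⟫ = ⟪f' (x + t • v), v⟫ - ⟪f' x, v⟫ := by
        rw [inner_sub_left]
      nlinarith [norm_nonneg v, norm_nonneg (f' (x + t • v) - f' x)]
  have hle := hanti (Set.left_mem_Icc.2 zero_le_one) (Set.right_mem_Icc.2 zero_le_one) zero_le_one
  have h0 : h 0 = f x := by simp [hh_def]
  have h1 : h 1 = f y - ⟪f' x, v⟫ - L / 2 * ‖v‖ ^ 2 := by
    simp [hh_def, hv]
  rw [h0, h1] at hle
  linarith

/-- small-t trick: if `0 ≤ t*a + t^2*b` for all small positive `t`, then `0 ≤ a`. -/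
lemma small_t_aux (a b : ℝ) (hb : 0 ≤ b)
    (key : ∀ t : ℝ, 0 < t → t ≤ 1 → 0 ≤ t * a + t ^ 2 * b) : 0 ≤ a := by
  by_contra ha
  push_neg at ha
  set t := min 1 ((-a) / (b + 1)) with ht_def
  have hb1 : (0:ℝ) < b + 1 := by linarith
  have ht1 : t ≤ 1 := min_le_left _ _
  have ht2 : t ≤ (-a) / (b + 1) := min_le_right _ _
  have ht0 : 0 < t := lt_min one_pos (div_pos (by linarith) hb1)
  have htb : t * (b + 1) ≤ -a := by
    rw [← le_div_iff₀ hb1]; exact ht2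
  have hk := key t ht0 ht1
  nlinarith [mul_pos ht0 ht0]

/-- small-t trick 2: if `e ≤ t*m` for all small positive `t`, then `e ≤ 0`. -/
lemma small_t_aux2 (e m : ℝ) (hm : 0 ≤ m)
    (key : ∀ t : ℝ, 0 < t → t < 1 → e ≤ t * m) : e ≤ 0 := by
  by_contra he
  push_neg at he
  set t := min (1/2) (e / (2 * (m + 1))) with ht_def
  have hm1 : (0:ℝ) < 2 * (m + 1) := by linarith
  have ht1 : t < 1 := lt_of_le_of_lt (min_le_left _ _) (by norm_num)
  have ht2 : t ≤ e / (2 * (m + 1)) := min_le_right _ _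
  have ht0 : 0 < t := lt_min (by norm_num) (div_pos he hm1)
  have htm : t * (2 * (m + 1)) ≤ e := by
    rw [← le_div_iff₀ hm1]; exact ht2
  have hk := key t ht0 ht1
  nlinarith [mul_nonneg ht0.le hm]

set_option maxHeartbeats 1000000 in
theorem prox_gd_strongly_convex_one_step_rate {E : Type*} [NormedAddCommGroup E]
    [InnerProductSpace ℝ E] [CompleteSpace E]
    (f g : E → ℝ) (f' : E → E) (L μ : ℝ) (hμ : 0 < μ) (hμL : μ ≤ L)
    (hdiff : ∀ x, HasGradientAt f (f' x) x)
    (hsmooth : ∀ x y, ‖f' x - f' y‖ ≤ L * ‖x - y‖)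
    (hstrong : ∀ x y, f x + ⟪f' x, y - x⟫ + (μ / 2) * ‖y - x‖ ^ 2 ≤ f y)
    (hgconv : ConvexOn ℝ Set.univ g) (hgcont : Continuous g)
    (lam : ℝ) (hlam : 0 < lam) (hlamL : lam ≤ 1 / L)
    (F : E → ℝ) (hF : F = fun y => f y + g y)
    (xstar : E) (hmin : ∀ y, F xstar ≤ F y)
    (xk xk1 : E)
    (hprox : ∀ y : E,
      (1 / (2 * lam)) * ‖xk1 - (xk - lam • f' xk)‖ ^ 2 + g xk1 ≤
        (1 / (2 * lam)) * ‖y - (xk - lam • f' xk)‖ ^ 2 + g y) :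
    F xk1 - F xstar ≤ (1 + lam * μ / 4)⁻¹ * (F xk - F xstar) := by
  subst hF
  simp only []
  have hL : 0 < L := lt_of_lt_of_le hμ hμL
  have hlamL' : lam * L ≤ 1 := by
    rw [le_div_iff₀ hL] at hlamL; linarith
  have hlamμ : lam * μ ≤ 1 := by nlinarith
  have h2lam : (0:ℝ) < 2 * lam := by linarith
  set z := xk - lam • f' xk with hz_def
  -- prox inequality in denominator-free form
  have hprox' : ∀ w : E, ‖xk1 - z‖ ^ 2 - ‖w - z‖ ^ 2 ≤ (g w - g xk1) * (2 * lam) := by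
    intro w
    have h := hprox w
    have h3 : (‖xk1 - z‖ ^ 2 - ‖w - z‖ ^ 2) / (2 * lam) ≤ g w - g xk1 := by
      have he : (‖xk1 - z‖ ^ 2 - ‖w - z‖ ^ 2) / (2 * lam)
          = (1 / (2 * lam)) * ‖xk1 - z‖ ^ 2 - (1 / (2 * lam)) * ‖w - z‖ ^ 2 := by ring
      rw [he]; linarith
    exact (div_le_iff₀ h2lam).mp h3
  -- subgradient-type inequality for g at xk1
  have hg_sub : ∀ y : E, 0 ≤ ⟪xk1 - z, y - xk1⟫ + lam * (g y - g xk1) := by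
    intro y
    apply small_t_aux _ (‖y - xk1‖ ^ 2 / 2) (by positivity)
    intro t ht0 ht1
    have hgc : g (xk1 + t • (y - xk1)) ≤ (1 - t) * g xk1 + t * g y := by
      have hpt : xk1 + t • (y - xk1) = (1 - t) • xk1 + t • y := by module
      rw [hpt]
      exact hgconv.2 (Set.mem_univ xk1) (Set.mem_univ y) (by linarith) ht0.le (by ring)
    have hexp : ‖(xk1 + t • (y - xk1)) - z‖ ^ 2
        = ‖xk1 - z‖ ^ 2 + 2 * (t * ⟪xk1 - z, y - xk1⟫) + t ^ 2 * ‖y - xk1‖ ^ 2 := by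
      rw [show (xk1 + t • (y - xk1)) - z = (xk1 - z) + t • (y - xk1) by module,
        norm_add_sq_real, real_inner_smul_right, norm_smul, Real.norm_eq_abs, mul_pow, sq_abs]
    have hp := hprox' (xk1 + t • (y - xk1))
    rw [hexp] at hp
    nlinarith [hp, hgc, mul_pos ht0 hlam]
  have hmin' : ∀ y : E, f xstar + g xstar ≤ f y + g y := hmin
  -- strong convexity combination for F = f + g
  have hFcomb : ∀ (u w : E) (t : ℝ), 0 ≤ t → t ≤ 1 →
      f (u + t • (w - u)) + g (u + t • (w - u)) ≤
        (1 - t) * (f u + g u) + t * (f w + g w) - μ / 2 * (t * (1 - t)) * ‖w - u‖ ^ 2 := by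
    intro u w t ht0 ht1
    set p := u + t • (w - u) with hp_def
    have h1 := hstrong p u
    have h2 := hstrong p w
    rw [show u - p = (-t) • (w - u) by rw [hp_def]; module,
      real_inner_smul_right, norm_smul, Real.norm_eq_abs, mul_pow, sq_abs] at h1
    rw [show w - p = (1 - t) • (w - u) by rw [hp_def]; module,
      real_inner_smul_right, norm_smul, Real.norm_eq_abs, mul_pow, sq_abs] at h2
    have hg : g p ≤ (1 - t) * g u + t * g w := by
      have hpt : p = (1 - t) • u + t • w := by rw [hp_def]; module
      rw [hpt]
      exact hgconv.2 (Set.mem_univ u) (Set.mem_univ w) (by linarith) ht0 (by ring)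
    nlinarith [mul_le_mul_of_nonneg_left h1 (by linarith : (0:ℝ) ≤ 1 - t),
      mul_le_mul_of_nonneg_left h2 ht0, hg]
  -- fundamental prox-gradient inequality (scaled by 2*lam)
  have hfund : ∀ y : E, 2 * lam * (f xk1 + g xk1) ≤
      2 * lam * (f y + g y) + (1 - lam * μ) * ‖y - xk‖ ^ 2 - ‖y - xk1‖ ^ 2 := by
    intro y
    have hd := descent_aux f f' L hdiff hsmooth xk xk1
    have hd2 : 2 * lam * f xk1 ≤
        2 * lam * f xk + 2 * lam * ⟪f' xk, xk1 - xk⟫ + ‖xk1 - xk‖ ^ 2 := by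
      nlinarith [mul_le_mul_of_nonneg_left hd h2lam.le, sq_nonneg ‖xk1 - xk‖,
        mul_le_mul_of_nonneg_right hlamL' (sq_nonneg ‖xk1 - xk‖)]
    have hs := hstrong xk y
    have hs2 := mul_le_mul_of_nonneg_left hs h2lam.le
    have hgs := hg_sub y
    have e2 : ⟪xk1 - z, y - xk1⟫ = ⟪xk1 - xk, y - xk1⟫ + lam * ⟪f' xk, y - xk1⟫ := by
      rw [show xk1 - z = (xk1 - xk) + lam • f' xk by rw [hz_def]; module,
        inner_add_left, real_inner_smul_left]
    have e3 : ⟪f' xk, y - xk1⟫ = ⟪f' xk, y - xk⟫ - ⟪f' xk, xk1 - xk⟫ := by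
      rw [← inner_sub_right]
      congr 1
      abel
    have e1 : ‖y - xk‖ ^ 2 = ‖y - xk1‖ ^ 2 + 2 * ⟪xk1 - xk, y - xk1⟫ + ‖xk1 - xk‖ ^ 2 := by
      rw [show y - xk = (y - xk1) + (xk1 - xk) by abel, norm_add_sq_real,
        real_inner_comm]
    rw [e2, e3] at hgs
    nlinarith [hd2, hs2, hgs, e1]
  -- strong convexity lower bound at the minimizer
  have hμc : μ * ‖xk - xstar‖ ^ 2 ≤ 2 * ((f xk + g xk) - (f xstar + g xstar)) := by
    have hkey : μ / 2 * ‖xk - xstar‖ ^ 2 - ((f xk + g xk) - (f xstar + g xstar)) ≤ 0 := by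
      apply small_t_aux2 _ (μ / 2 * ‖xk - xstar‖ ^ 2) (by positivity)
      intro t ht0 ht1
      have hcomb := hFcomb xstar xk t ht0.le ht1.le
      have hm := hmin' (xstar + t • (xk - xstar))
      nlinarith [hcomb, hm]
    linarith
  have hD0 : 0 ≤ (f xk + g xk) - (f xstar + g xstar) := by linarith [hmin' xk]
  -- final assembly with y₀ = xk + (lam*μ/2) • (xstar - xk)
  have hθ0 : (0:ℝ) ≤ lam * μ / 2 := by positivity
  have hθ1 : lam * μ / 2 ≤ 1 := by linarith
  have hB := hfund (xk + (lam * μ / 2) • (xstar - xk))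
  have hFy := hFcomb xk xstar (lam * μ / 2) hθ0 hθ1
  have hrev : ‖xstar - xk‖ ^ 2 = ‖xk - xstar‖ ^ 2 := by rw [norm_sub_rev]
  have hny : ‖(xk + (lam * μ / 2) • (xstar - xk)) - xk‖ ^ 2
      = (lam * μ / 2) ^ 2 * ‖xk - xstar‖ ^ 2 := by
    rw [show (xk + (lam * μ / 2) • (xstar - xk)) - xk = (lam * μ / 2) • (xstar - xk) by abel,
      norm_smul, Real.norm_eq_abs, mul_pow, sq_abs, hrev]
  rw [hny] at hB
  have hmain : 2 * lam * ((f xk1 + g xk1) - (f xstar + g xstar)) ≤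
      2 * lam * ((1 - lam * μ / 4 - (lam * μ) ^ 2 / 4) *
        ((f xk + g xk) - (f xstar + g xstar))) := by
    have hcoef : (0:ℝ) ≤ (1 - lam * μ) * lam ^ 2 * μ / 4 := by
      have h1 : (0:ℝ) ≤ 1 - lam * μ := by linarith
      have h2 : (0:ℝ) ≤ lam ^ 2 * μ / 4 := by positivity
      nlinarith [mul_nonneg h1 h2]
    have h4 := mul_le_mul_of_nonneg_left hμc hcoef
    have hFy2 := mul_le_mul_of_nonneg_left hFy h2lam.le
    have hdrop : 0 ≤ lam * μ * (lam * μ / 2 * (1 - lam * μ / 2)) * ‖xstar - xk‖ ^ 2 := by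
      have h1 : (0:ℝ) ≤ 1 - lam * μ / 2 := by linarith
      have h2 : (0:ℝ) ≤ lam * μ * (lam * μ / 2) := by positivity
      nlinarith [mul_nonneg (mul_nonneg h2 h1) (sq_nonneg ‖xstar - xk‖)]
    nlinarith [hB, hFy2, h4, sq_nonneg ‖(xk + (lam * μ / 2) • (xstar - xk)) - xk1‖, hrev, hdrop]
  have h1s : (0:ℝ) < 1 + lam * μ / 4 := by positivity
  rw [← div_eq_inv_mul, le_div_iff₀ h1s]
  have h5 := mul_le_mul_of_nonneg_left hmain h1s.le
  have h6 : (1 + lam * μ / 4) * (2 * lam * ((1 - lam * μ / 4 - (lam * μ) ^ 2 / 4) *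
      ((f xk + g xk) - (f xstar + g xstar)))) ≤
      2 * lam * ((f xk + g xk) - (f xstar + g xstar)) := by
    nlinarith [mul_nonneg (mul_nonneg hlam.le hD0) (sq_nonneg (lam * μ)),
      mul_nonneg (mul_nonneg (mul_nonneg hlam.le hD0) (sq_nonneg (lam * μ)))
        (mul_nonneg hlam.le hμ.le)]
  have h7 : (2 * lam) * (((f xk1 + g xk1) - (f xstar + g xstar)) * (1 + lam * μ / 4)) ≤
      (2 * lam) * ((f xk + g xk) - (f xstar + g xstar)) := by nlinarith [h5, h6]
  have h8 := le_of_mul_le_mul_left h7 h2lam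
  linarith [h8]
end
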